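/- Let M be an integer matrix (a linear map Z^m → Z^n extended to R^m → R^n). If the homogeneous system Mx = 0 admits a solution x ∈ R^m with all coordinates strictly positive, then it admits a solution y ∈ Z^m with all coordinates strictly positive. -/

import Mathlib

open Matrix Module Submodule Set

/-- Coordinatewise cast `ℚ^m → ℝ^m` as a `ℚ`-linear map. -/
noncomputable def castLM (m : ℕ) : (Fin m → ℚ) →ₗ[ℚ] (Fin m → ℝ) :=
  LinearMap.pi fun i => (Algebra.linearMap ℚ ℝ).comp (LinearMap.proj i)

@[simp] lemma castLM_apply {m : ℕ} (x : Fin m → ℚ) (i : Fin m) :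
    castLM m x i = (x i : ℝ) := rfl

/-- Rational vectors that are `ℚ`-linearly independent remain `ℝ`-linearly
independent after coordinatewise cast. -/
lemma indep_cast {m k : ℕ} {v : Fin k → (Fin m → ℚ)} (hv : LinearIndependent ℚ v) :
    LinearIndependent ℝ (fun j => castLM m (v j)) := by
  classical
  set B : Matrix (Fin m) (Fin k) ℚ := Matrix.of fun i j => v j i with hB
  have hmulvec : ∀ g : Fin k → ℚ, B.mulVec g = 0 → g = 0 := by
    intro g hg
    have h1 := Fintype.linearIndependent_iff.mp hv g ?_
    · funext j; exact h1 j
    · funext i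
      have := congrFun hg i
      simpa [Matrix.mulVec, dotProduct, hB, Finset.sum_apply, mul_comm] using this
  set G : Matrix (Fin k) (Fin k) ℚ := Bᵀ * B with hG
  have hdet : G.det ≠ 0 := by
    intro h0
    obtain ⟨w, hw0, hw⟩ := (Matrix.exists_mulVec_eq_zero_iff).mpr h0
    have hwker : w ∈ LinearMap.ker G.mulVecLin := by
      simpa [Matrix.mulVecLin_apply] using hw
    rw [hG, Matrix.ker_mulVecLin_transpose_mul_self] at hwker
    exact hw0 (hmulvec w (by simpa [Matrix.mulVecLin_apply] using hwker))
  have hdetcast : (G.map (Rat.cast : ℚ → ℝ)).det = ((G.det : ℚ) : ℝ) := by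
    simpa using (RingHom.map_det (Rat.castHom ℝ) G).symm
  have hdetR : (G.map (Rat.cast : ℚ → ℝ)).det ≠ 0 := by
    rw [hdetcast]; exact_mod_cast hdet
  rw [Fintype.linearIndependent_iff]
  intro c hc
  set Br : Matrix (Fin m) (Fin k) ℝ := B.map (Rat.cast : ℚ → ℝ) with hBr
  have hBc : Br.mulVec c = 0 := by
    funext i
    have := congrFun hc i
    simpa [Matrix.mulVec, dotProduct, hBr, hB, Finset.sum_apply, mul_comm] using this
  have hGc : (G.map (Rat.cast : ℚ → ℝ)).mulVec c = 0 := by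
    have : G.map (Rat.cast : ℚ → ℝ) = Brᵀ * Br := by
      have h5 := Matrix.map_mul (L := Bᵀ) (M := B) (f := Rat.castHom ℝ)
      rw [hG, hBr]
      simpa [Matrix.transpose_map] using h5
    rw [this, ← Matrix.mulVec_mulVec, hBc, Matrix.mulVec_zero]
  by_contra hcn
  push_neg at hcn
  obtain ⟨j, hj⟩ := hcn
  have : c ≠ 0 := fun h => hj (by rw [h]; rfl)
  exact hdetR ((Matrix.exists_mulVec_eq_zero_iff).mp ⟨c, this, hGc⟩)

/-- The real span of the casts of a family of rational vectors has dimension at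
least the `ℚ`-dimension of their `ℚ`-span. -/
lemma finrank_span_cast_le {m : ℕ} {ι : Type*} [Fintype ι] (w : ι → (Fin m → ℚ)) :
    finrank ℚ (span ℚ (Set.range w)) ≤
      finrank ℝ (span ℝ (Set.range fun i => castLM m (w i))) := by
  classical
  set W := span ℚ (Set.range w) with hW
  haveI : FiniteDimensional ℚ W := inferInstance
  set r := finrank ℚ W with hr
  let b := finBasis ℚ W
  let u : Fin r → (Fin m → ℚ) := fun j => (b j : Fin m → ℚ)
  have hu : LinearIndependent ℚ u :=
    b.linearIndependent.map' W.subtype (Submodule.ker_subtype W)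
  have hre : LinearIndependent ℝ (fun j => castLM m (u j)) := indep_cast hu
  have hmem : ∀ z ∈ W, castLM m z ∈ span ℝ (Set.range fun i => castLM m (w i)) := by
    intro z hz
    have h2 : castLM m z ∈ Submodule.map (castLM m) W := Submodule.mem_map_of_mem hz
    rw [hW, Submodule.map_span] at h2
    have h3 : (castLM m) '' (Set.range w) = Set.range fun i => castLM m (w i) := by
      rw [← Set.range_comp]; rfl
    rw [h3] at h2
    exact Submodule.span_le_restrictScalars ℚ ℝ _ h2
  haveI : FiniteDimensional ℝ (span ℝ (Set.range fun i => castLM m (w i))) :=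
    FiniteDimensional.span_of_finite ℝ (Set.finite_range _)
  let g : Fin r → (span ℝ (Set.range fun i => castLM m (w i))) :=
    fun j => ⟨castLM m (u j), hmem _ (b j).2⟩
  have hg : LinearIndependent ℝ g := by
    apply LinearIndependent.of_comp (Submodule.subtype _)
    convert hre
    rfl
  simpa using hg.fintype_card_le_finrank
/-- If a homogeneous integer linear system has a strictly positive real solution,
then it has a strictly positive integer solution. -/
theorem pos_int_solution_of_pos_real_solution {n m : ℕ} (M : Matrix (Fin n) (Fin m) ℤ)
    (h : ∃ x : Fin m → ℝ, (M.map (Int.cast : ℤ → ℝ)).mulVec x = 0 ∧ ∀ i, 0 < x i) :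
    ∃ y : Fin m → ℤ, M.mulVec y = 0 ∧ ∀ i, 0 < y i := by
  classical
  rcases Nat.eq_zero_or_pos m with hm | hm
  · subst hm
    refine ⟨fun i => 1, ?_, fun i => one_pos⟩
    funext a
    simp [Matrix.mulVec, dotProduct]
  obtain ⟨x, hx0, hxpos⟩ := h
  set Mq : Matrix (Fin n) (Fin m) ℚ := M.map (Int.cast : ℤ → ℚ) with hMq
  set Mr : Matrix (Fin n) (Fin m) ℝ := Mq.map (Rat.cast : ℚ → ℝ) with hMr
  have hMrM : M.map (Int.cast : ℤ → ℝ) = Mr := by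
    ext a i; simp [hMr, hMq]
  set K := LinearMap.ker Mq.mulVecLin with hK
  set k := finrank ℚ K with hk
  let b := finBasis ℚ K
  let v : Fin k → (Fin m → ℚ) := fun j => ((b j : K) : Fin m → ℚ)
  have hv : LinearIndependent ℚ v :=
    b.linearIndependent.map' K.subtype (Submodule.ker_subtype K)
  have hvker : ∀ j, Mq.mulVec (v j) = 0 := fun j => (b j).2
  set T := span ℝ (Set.range fun j => castLM m (v j)) with hT
  -- T is inside the real kernel
  have hTle : T ≤ LinearMap.ker Mr.mulVecLin := by
    rw [hT, Submodule.span_le]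
    rintro _ ⟨j, rfl⟩
    simp only [SetLike.mem_coe, LinearMap.mem_ker, Matrix.mulVecLin_apply]
    funext a
    simp only [Pi.zero_apply]
    have h1 : ((Mq.mulVec (v j) a : ℚ) : ℝ) = 0 := by rw [hvker j]; simp
    rw [← h1]
    simp [Matrix.mulVec, dotProduct, hMr, Rat.cast_sum]
  -- dimension comparison
  have hrange : finrank ℚ (LinearMap.range Mq.mulVecLin) ≤
      finrank ℝ (LinearMap.range Mr.mulVecLin) := by
    rw [Matrix.range_mulVecLin, Matrix.range_mulVecLin]
    have h2 := finrank_span_cast_le (m := n) (w := fun i => Mqᵀ i)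
    have h3 : (Set.range fun i => castLM n (Mqᵀ i)) = Set.range Mrᵀ := by
      ext z
      constructor
      · rintro ⟨i, rfl⟩; exact ⟨i, by funext l; simp [hMr, Matrix.transpose_apply]⟩
      · rintro ⟨i, rfl⟩; exact ⟨i, by funext l; simp [hMr, Matrix.transpose_apply]⟩

    rw [h3] at h2
    exact h2
  have hrn1 := LinearMap.finrank_range_add_finrank_ker Mq.mulVecLin
  have hrn2 := LinearMap.finrank_range_add_finrank_ker Mr.mulVecLin
  rw [Module.finrank_pi] at hrn1 hrn2
  rw [← hK] at hrn1
  have hdimker : finrank ℝ (LinearMap.ker Mr.mulVecLin) ≤ k := by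
    simp only [Fintype.card_fin] at hrn1 hrn2
    omega
  have hTrank : finrank ℝ T = k := by
    rw [hT, finrank_span_eq_card (indep_cast hv), Fintype.card_fin]
  have hTeq : T = LinearMap.ker Mr.mulVecLin := by
    have : FiniteDimensional ℝ (LinearMap.ker Mr.mulVecLin) := inferInstance
    exact Submodule.eq_of_le_of_finrank_le hTle (by rw [hTrank]; exact hdimker)
  -- x lies in T
  have hxT : x ∈ T := by
    rw [hTeq]
    simp only [LinearMap.mem_ker, Matrix.mulVecLin_apply]
    rw [← hMrM]; exact hx0
  rw [hT, mem_span_range_iff_exists_fun] at hxT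
  obtain ⟨c, hc⟩ := hxT
  -- approximate coefficients by rationals
  have : Nonempty (Fin m) := ⟨⟨0, hm⟩⟩
  obtain ⟨i0, -, hi0⟩ := Finset.exists_min_image Finset.univ x ⟨⟨0, hm⟩, Finset.mem_univ _⟩
  set ε : ℝ := x i0 with hε
  have hεpos : 0 < ε := hxpos i0
  set V : ℝ := (∑ j, ∑ i, |((v j i : ℚ) : ℝ)|) + 1 with hV
  have hVpos : 0 < V := by
    have : (0:ℝ) ≤ ∑ j, ∑ i, |((v j i : ℚ) : ℝ)| :=
      Finset.sum_nonneg fun j _ => Finset.sum_nonneg fun i _ => abs_nonneg _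
    linarith
  have hVbd : ∀ j i, |((v j i : ℚ) : ℝ)| ≤ V := by
    intro j i
    have h1 : |((v j i : ℚ) : ℝ)| ≤ ∑ i, |((v j i : ℚ) : ℝ)| :=
      Finset.single_le_sum (f := fun i => |((v j i : ℚ) : ℝ)|)
        (fun i _ => abs_nonneg _) (Finset.mem_univ i)
    have h2 : (∑ i, |((v j i : ℚ) : ℝ)|) ≤ ∑ j, ∑ i, |((v j i : ℚ) : ℝ)| :=
      Finset.single_le_sum (f := fun j => ∑ i, |((v j i : ℚ) : ℝ)|)
        (fun j _ => Finset.sum_nonneg fun i _ => abs_nonneg _) (Finset.mem_univ j)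
    linarith
  set δ : ℝ := ε / (V * (k + 1)) with hδ
  have hδpos : 0 < δ := by
    apply div_pos hεpos
    positivity
  choose q hq using fun j : Fin k => exists_rat_near (c j) hδpos
  -- the rational approximate solution
  set y' : Fin m → ℚ := fun i => ∑ j, q j * v j i with hy'
  have hy'ker : Mq.mulVec y' = 0 := by
    have hsum : y' = ∑ j, q j • v j := by
      funext i; simp [hy', Finset.sum_apply]
    have h2 : Mq.mulVecLin y' = 0 := by
      rw [hsum, map_sum]
      apply Finset.sum_eq_zero; intro j _
      rw [LinearMap.map_smul]
      rw [show Mq.mulVecLin (v j) = 0 from by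
        simp only [Matrix.mulVecLin_apply]; exact hvker j]
      simp
    simpa [Matrix.mulVecLin_apply] using h2
  have hy'close : ∀ i, |x i - ((y' i : ℚ) : ℝ)| < ε := by
    intro i
    have hxi : x i = ∑ j, c j * ((v j i : ℚ) : ℝ) := by
      have := congrFun hc i
      simpa [Finset.sum_apply] using this.symm
    have hyi : ((y' i : ℚ) : ℝ) = ∑ j, (q j : ℝ) * ((v j i : ℚ) : ℝ) := by
      simp [hy', Rat.cast_sum]
    rw [hxi, hyi, ← Finset.sum_sub_distrib]
    calc |∑ j, (c j * ((v j i : ℚ) : ℝ) - (q j : ℝ) * ((v j i : ℚ) : ℝ))|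
        ≤ ∑ j, |c j * ((v j i : ℚ) : ℝ) - (q j : ℝ) * ((v j i : ℚ) : ℝ)| :=
          Finset.abs_sum_le_sum_abs _ _
      _ = ∑ j, |c j - (q j : ℝ)| * |((v j i : ℚ) : ℝ)| := by
          congr 1; funext j; rw [← sub_mul, abs_mul]
      _ ≤ ∑ j : Fin k, δ * V := by
          apply Finset.sum_le_sum
          intro j _
          exact mul_le_mul (le_of_lt (hq j)) (hVbd j i) (abs_nonneg _)
            (le_of_lt hδpos)
      _ = k * (δ * V) := by rw [Finset.sum_const, Finset.card_univ, Fintype.card_fin]; ring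
      _ < ε := by
          have hkk : (k:ℝ) * (δ * V) = ε * (V * k) / (V * (k+1)) := by rw [hδ]; ring
          rw [hkk, div_lt_iff₀ (by positivity)]
          nlinarith [hεpos, hVpos, Nat.cast_nonneg (α := ℝ) k]
  have hy'pos : ∀ i, 0 < y' i := by
    intro i
    have h1 : |x i - ((y' i : ℚ) : ℝ)| < ε := hy'close i
    have h2 : ε ≤ x i := hi0 i (Finset.mem_univ i)
    have h3 : (0:ℝ) < ((y' i : ℚ) : ℝ) := by
      have := abs_lt.mp h1
      linarith
    exact_mod_cast h3
  -- clear denominators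
  set N : ℕ := ∏ i, (y' i).den with hN
  have hNpos : 0 < N := Finset.prod_pos fun i _ => (y' i).pos
  have hint : ∀ i, ∃ z : ℤ, (z : ℚ) = y' i * N := by
    intro i
    obtain ⟨t, ht⟩ : (y' i).den ∣ N := Finset.dvd_prod_of_mem _ (Finset.mem_univ i)
    refine ⟨(y' i).num * t, ?_⟩
    push_cast [ht]
    rw [← Rat.mul_den_eq_num]
    ring
  choose z hz using hint
  refine ⟨z, ?_, ?_⟩
  · funext a
    have hcast : ((M.mulVec z a : ℤ) : ℚ) = (N : ℚ) * (Mq.mulVec y' a) := by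
      simp only [Matrix.mulVec, dotProduct, hMq, Int.cast_sum, Finset.mul_sum]
      congr 1; funext i
      rw [Int.cast_mul, hz i]
      simp [Matrix.map_apply]
      ring
    have : ((M.mulVec z a : ℤ) : ℚ) = 0 := by rw [hcast, hy'ker]; simp
    exact_mod_cast this
  · intro i
    have h1 : (0:ℚ) < y' i * N := by
      apply mul_pos (hy'pos i)
      exact_mod_cast hNpos
    rw [← hz i] at h1
    exact_mod_cast h1
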